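/- If t ⊵_d s (t degenerates to s with approximation degree d) for k-tensors t and s, then t ⊵_d^{(k−1)d} s, i.e., the degeneration can be realized with error degree at most (k−1)d. -/

import Mathlib

open scoped BigOperators

universe u v

noncomputable section

variable {F : Type v}

/-- Tensor rank: the least `r` such that `T` is a sum of `r` simple tensors. -/
def tRank {ι : Type*} [Fintype ι] [DecidableEq ι] {γ : ι → Type*} [∀ i, Fintype (γ i)]
    [Field F] (T : (∀ i, γ i) → F) : ℕ :=
  sInf {r | ∃ v : Fin r → ∀ i, γ i → F, ∀ x, T x = ∑ j, ∏ i, v j i (x i)}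

/-- Tensor product of a `ι`-indexed tensor and a `κ`-indexed tensor (no grouping). -/
def tProd [Field F] {ι κ : Type*} {γ : ι → Type u} {δ : κ → Type u}
    (S : (∀ i, γ i) → F) (T : (∀ j, δ j) → F) : (∀ i : ι ⊕ κ, Sum.elim γ δ i) → F :=
  fun x => S (fun i => x (Sum.inl i)) * T (fun j => x (Sum.inr j))

instance sumElimFintype {ι κ : Type*} {γ : ι → Type u} {δ : κ → Type u}
    [hγ : ∀ i, Fintype (γ i)] [hδ : ∀ j, Fintype (δ j)] :
    ∀ i : ι ⊕ κ, Fintype (Sum.elim γ δ i)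
  | Sum.inl i => hγ i
  | Sum.inr j => hδ j

/-- Tensor Kronecker product of two tensors with the same index set. -/
def tKron [Field F] {ι : Type*} {γ δ : ι → Type*}
    (S : (∀ i, γ i) → F) (T : (∀ i, δ i) → F) : (∀ i, γ i × δ i) → F :=
  fun x => S (fun i => (x i).1) * T (fun i => (x i).2)

/-- `n`-fold tensor product power of a tensor (no grouping), a tensor indexed by `Fin n × ι`. -/
def tPow [Field F] {ι : Type*} {γ : ι → Type*} (T : (∀ i, γ i) → F) (n : ℕ) :
    (∀ p : Fin n × ι, γ p.2) → F :=
  fun x => ∏ j : Fin n, T (fun i => x (j, i))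

/-- Restriction `t ≥ s`: `s` is obtained from `t` by applying linear maps on each factor. -/
def Restricts [Field F] {ι : Type*} [Fintype ι] [DecidableEq ι]
    {γ : ι → Type*} {δ : ι → Type*} [∀ i, Fintype (γ i)]
    (t : (∀ i, γ i) → F) (s : (∀ i, δ i) → F) : Prop :=
  ∃ A : ∀ i, δ i → γ i → F, ∀ x, (∑ y : ∀ i, γ i, (∏ i, A i (x i) (y i)) * t y) = s x

/-- Degeneration `t ⊵_d^e s` with approximation degree `d` and error degree `e`. -/
def Degen [Field F] {ι : Type*} [Fintype ι] [DecidableEq ι]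
    {γ : ι → Type*} {δ : ι → Type*} [∀ i, Fintype (γ i)]
    (t : (∀ i, γ i) → F) (s : (∀ i, δ i) → F) (d e : ℕ) : Prop :=
  ∃ A : ∀ i, δ i → γ i → Polynomial F, ∃ s' : Fin e → ((∀ i, δ i) → F),
    ∀ x, (∑ y : ∀ i, γ i, (∏ i, A i (x i) (y i)) * Polynomial.C (t y)) =
      Polynomial.C (s x) * Polynomial.X ^ d +
      ∑ j : Fin e, Polynomial.C (s' j x) * Polynomial.X ^ (d + 1 + (j : ℕ))

/-- The rank-`r` order-`k` unit tensor `⟨r⟩_k = ∑_j b_j^{⊗k}`. -/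
def unitTensor (F : Type v) [Field F] (r k : ℕ) : (Fin k → Fin r) → F :=
  fun x => ∑ j : Fin r, ∏ i : Fin k, if x i = j then 1 else 0

/-- The tensor `W_k = ∑_{type(i)=(k-1,1)} b_{i₁} ⊗ ⋯ ⊗ b_{i_k}` in `(F²)^{⊗k}`. -/
def Wtensor (F : Type v) [Field F] (k : ℕ) : (Fin k → Fin 2) → F :=
  fun x => if (∑ i, (x i : ℕ)) = 1 then 1 else 0

/-- `R^e(s)`: border rank with error degree at most `e`. -/
def errRank [Field F] {k : ℕ} {γ : Fin k → Type*} [∀ i, Fintype (γ i)]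
    (e : ℕ) (s : (∀ i, γ i) → F) : ℕ :=
  sInf {r | ∃ d, Degen (unitTensor F r k) s d e}

/-- `R_d(s)`: border rank with approximation degree `d`. -/
def degRank [Field F] {k : ℕ} {γ : Fin k → Type*} [∀ i, Fintype (γ i)]
    (d : ℕ) (s : (∀ i, γ i) → F) : ℕ :=
  sInf {r | ∃ e, Degen (unitTensor F r k) s d e}

/-- Border rank over ℂ: the least `r` such that `T` is a limit of tensors of rank `≤ r`. -/
def tBorderRank {ι : Type*} [Fintype ι] [DecidableEq ι] {γ : ι → Type*} [∀ i, Fintype (γ i)]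
    (T : (∀ i, γ i) → ℂ) : ℕ :=
  sInf {r | T ∈ closure {T' : (∀ i, γ i) → ℂ | tRank T' ≤ r}}

end
/-- a degeneration with approximation degree `d` can be realized with
error degree at most `(k−1)d`. -/
theorem degen_error_bound {F : Type v} [Field F] {k : ℕ} {γ δ : Fin k → Type u}
    [∀ i, Fintype (γ i)] (t : (∀ i, γ i) → F) (s : (∀ i, δ i) → F) (d : ℕ)
    (h : ∃ e, Degen t s d e) :
    Degen t s d ((k - 1) * d) := by
  classical
  obtain ⟨e, A, s', hA⟩ := h
  -- truncation at degree d
  set T : Polynomial F → Polynomial F :=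
    fun p => ∑ n ∈ Finset.range (d + 1), Polynomial.monomial n (p.coeff n) with hT
  have hTc : ∀ p m, (T p).coeff m = if m ≤ d then p.coeff m else 0 := by
    intro p m
    simp [hT, Polynomial.finset_sum_coeff, Polynomial.coeff_monomial, Nat.lt_succ_iff]
  have hTdeg : ∀ p, (T p).natDegree ≤ d := by
    intro p
    refine Polynomial.natDegree_le_iff_coeff_eq_zero.2 (fun m hm => ?_)
    rw [hTc]; simp [Nat.not_le.2 hm]
  -- products agree on low coefficients
  have key : ∀ (σ : Finset (Fin k)) (p q : Fin k → Polynomial F),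
      (∀ i n, n ≤ d → (p i).coeff n = (q i).coeff n) →
      ∀ m, m ≤ d → (∏ i ∈ σ, p i).coeff m = (∏ i ∈ σ, q i).coeff m := by
    intro σ
    induction σ using Finset.cons_induction with
    | empty => simp
    | cons a σ ha ih =>
      intro p q hpq m hm
      rw [Finset.prod_cons, Finset.prod_cons, Polynomial.coeff_mul, Polynomial.coeff_mul]
      refine Finset.sum_congr rfl (fun x hx => ?_)
      rw [Finset.HasAntidiagonal.mem_antidiagonal] at hx
      rw [hpq a x.1 (by omega), ih p q hpq x.2 (by omega)]
  set B : ∀ i, δ i → γ i → Polynomial F := fun i x y => T (A i x y) with hB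
  set L : (∀ i, δ i) → Polynomial F :=
    fun x => ∑ y : ∀ i, γ i, (∏ i, B i (x i) (y i)) * Polynomial.C (t y) with hL
  -- low coefficients of L agree with old left-hand side
  have hlow : ∀ x m, m ≤ d →
      (L x).coeff m =
        (∑ y : ∀ i, γ i, (∏ i, A i (x i) (y i)) * Polynomial.C (t y)).coeff m := by
    intro x m hm
    rw [hL]
    simp only [Polynomial.finset_sum_coeff, Polynomial.coeff_mul_C]
    refine Finset.sum_congr rfl (fun y _ => ?_)
    congr 1
    exact key Finset.univ _ _ (fun i n hn => (hTc (A i (x i) (y i)) n).trans (if_pos hn)) m hm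
  -- L has coefficients zero above k*d
  have hhigh : ∀ x m, k * d < m → (L x).coeff m = 0 := by
    intro x m hm
    rw [hL]
    simp only [Polynomial.finset_sum_coeff, Polynomial.coeff_mul_C]
    refine Finset.sum_eq_zero (fun y _ => ?_)
    have hdeg : (∏ i, B i (x i) (y i)).natDegree ≤ k * d := by
      calc (∏ i, B i (x i) (y i)).natDegree
          ≤ ∑ i : Fin k, (B i (x i) (y i)).natDegree := Polynomial.natDegree_prod_le _ _
        _ ≤ ∑ _i : Fin k, d := Finset.sum_le_sum (fun i _ => hTdeg _)
        _ = k * d := by simp [mul_comm]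
    rw [Polynomial.coeff_eq_zero_of_natDegree_lt (lt_of_le_of_lt hdeg hm), zero_mul]
  refine ⟨B, fun j x => (L x).coeff (d + 1 + (j : ℕ)), fun x => ?_⟩
  have hold := hA x
  have herr : ∀ (N : ℕ) (f : Fin N → F) (m : ℕ), m ≤ d →
      (∑ j : Fin N, Polynomial.C (f j) * Polynomial.X ^ (d + 1 + (j : ℕ))).coeff m = 0 := by
    intro N f m hm
    rw [Polynomial.finset_sum_coeff]
    refine Finset.sum_eq_zero (fun j _ => ?_)
    simp only [Polynomial.coeff_C_mul, Polynomial.coeff_X_pow]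
    rw [if_neg (by omega), mul_zero]
  have hLx : (∑ y : ∀ i, γ i, (∏ i, B i (x i) (y i)) * Polynomial.C (t y)) = L x := rfl
  rw [hLx]
  ext m
  rcases le_or_gt m d with hm | hm
  · rw [Polynomial.coeff_add, herr _ _ m hm, add_zero, hlow x m hm, hold,
      Polynomial.coeff_add, herr _ _ m hm, add_zero]
  · have hS : (∑ j : Fin ((k - 1) * d),
        Polynomial.C ((L x).coeff (d + 1 + (j : ℕ))) * Polynomial.X ^ (d + 1 + (j : ℕ))).coeff m
        = ∑ j : Fin ((k - 1) * d),
            if m = d + 1 + (j : ℕ) then (L x).coeff (d + 1 + (j : ℕ)) else 0 := by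
      rw [Polynomial.finset_sum_coeff]
      refine Finset.sum_congr rfl (fun j _ => ?_)
      simp [Polynomial.coeff_C_mul, Polynomial.coeff_X_pow, mul_ite]
    rw [Polynomial.coeff_add, hS, Polynomial.coeff_C_mul, Polynomial.coeff_X_pow,
      if_neg (by omega : ¬ m = d), mul_zero, zero_add]
    rcases le_or_gt m (d + (k - 1) * d) with hm2 | hm2
    · have hj : m - d - 1 < (k - 1) * d := by omega
      rw [Finset.sum_eq_single (⟨m - d - 1, hj⟩ : Fin ((k - 1) * d))]
      · simp only [Fin.val_mk]
        rw [if_pos (by omega : m = d + 1 + (m - d - 1))]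
        congr 1
        omega
      · intro j _ hj'
        refine if_neg (fun hc => hj' (Fin.ext ?_))
        show (j : ℕ) = m - d - 1
        omega
      · intro hmem; exact absurd (Finset.mem_univ _) hmem
    · have hkd : k * d < m := by
        cases k with
        | zero => simp only [Nat.zero_mul]; omega
        | succ n =>
          have h1 : (n + 1) * d = d + n * d := by ring
          have h2 : (n + 1 - 1) * d = n * d := by simp
          omega
      rw [hhigh x m hkd]
      refine (Finset.sum_eq_zero (fun j _ => if_neg ?_)).symm
      have := j.2
      omega
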